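/- (LU invariance) Let ρ be an n-qubit density matrix, let U₁,…,U_n be 2×2 unitary matrices, and let ρ' = (U₁ ⊗ ⋯ ⊗ U_n) ρ (U₁ ⊗ ⋯ ⊗ U_n)†. Then for every nonempty proper subset A ⊂ {1,…,n}, the A-matricizations of the full correlation tensors of ρ and ρ' have the same singular values; in particular ‖T(ρ')_{\underline{A}}‖_k = ‖T(ρ)_{\underline{A}}‖_k for every Ky Fan k norm, and the Frobenius and trace norms of all matricizations are invariant under local unitary transformations. -/

import Mathlib

open Matrix BigOperators ComplexOrder

noncomputable section

/-- The three standard Pauli matrices. -/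
def pauli : Fin 3 → Matrix (Fin 2) (Fin 2) ℂ :=
  ![!![0, 1; 1, 0], !![0, -Complex.I; Complex.I, 0], !![1, 0; 0, -1]]

/-- The tensor (Kronecker) product of `n` local operators, acting on
`(ℂ²)^{⊗n}` with the Hilbert space indexed by functions `Fin n → Fin 2`. -/
def tensorOp {n : ℕ} (A : Fin n → Matrix (Fin 2) (Fin 2) ℂ) :
    Matrix (Fin n → Fin 2) (Fin n → Fin 2) ℂ :=
  fun r c => ∏ j, A j (r j) (c j)

/-- The full correlation tensor of an `n`-qubit state:
`T_{i₁⋯i_n} = tr(ρ (σ_{i₁} ⊗ ⋯ ⊗ σ_{i_n}))`. -/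
def corr {n : ℕ} (ρ : Matrix (Fin n → Fin 2) (Fin n → Fin 2) ℂ)
    (f : Fin n → Fin 3) : ℝ :=
  ((ρ * tensorOp fun j => pauli (f j)).trace).re

/-- The `A`-matricization of an `n`-index tensor `v`: the real matrix whose row
index collects the indices in `A` and whose column index collects the remaining
indices. -/
def matricize {n m : ℕ} (A : Finset (Fin n)) (v : (Fin n → Fin m) → ℝ) :
    Matrix ({j // j ∈ A} → Fin m) ({j // j ∉ A} → Fin m) ℝ :=
  fun r c => v fun j => if h : j ∈ A then r ⟨j, h⟩ else c ⟨j, h⟩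

/-- The singular values of a real matrix `M`: the square roots of the
eigenvalues of `MᵀM = MᴴM`. -/
def singVals {I J : Type*} [Fintype I] [Fintype J] [DecidableEq J]
    (M : Matrix I J ℝ) : J → ℝ :=
  fun j => Real.sqrt ((Matrix.posSemidef_conjTranspose_mul_self M).1.eigenvalues j)

/-- The Ky Fan `k` norm: the maximum, over sets of `k` of the singular values,
of their sum — equivalently, the sum of the `k` largest singular values. -/
def kyFanNorm {I J : Type*} [Fintype I] [Fintype J] [DecidableEq J]
    (k : ℕ) (M : Matrix I J ℝ) : ℝ :=
  (Finset.univ : Finset (Finset J)).sup' ⟨∅, Finset.mem_univ ∅⟩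
    fun s => if s.card = k then ∑ j ∈ s, singVals M j else 0

/-- The trace norm: the sum of all singular values. -/
def traceNorm {I J : Type*} [Fintype I] [Fintype J] [DecidableEq J]
    (M : Matrix I J ℝ) : ℝ :=
  ∑ j, singVals M j

open Polynomial in
theorem charpoly_orth_conj {J : Type*} [Fintype J] [DecidableEq J] (N Q : Matrix J J ℝ)
    (hQ : Q * Qᵀ = 1) : (Q * N * Qᵀ).charpoly = N.charpoly := by
  have h2 : Qᵀ * Q = 1 := mul_eq_one_comm.mp hQ
  unfold Matrix.charpoly
  have : charmatrix (Q * N * Qᵀ) = (Q.map C) * charmatrix N * (Qᵀ.map C) := by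
    unfold charmatrix
    rw [Matrix.mul_sub, Matrix.sub_mul]
    congr 1
    · rw [scalar_apply, ← Matrix.smul_one_eq_diagonal, Matrix.mul_smul, Matrix.mul_one,
        Matrix.smul_mul, ← Matrix.map_mul, hQ]
      simp [Matrix.smul_one_eq_diagonal]
    · simp [Matrix.map_mul]
  rw [this, det_mul, det_mul, mul_comm, ← mul_assoc, ← det_mul, ← Matrix.map_mul, h2]
  simp

open Polynomial in
theorem charpoly_symm {J : Type*} [Fintype J] [DecidableEq J] {N : Matrix J J ℝ}
    (hN : N.IsHermitian) : N.charpoly = ∏ i, (X - C (hN.eigenvalues i)) := by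
  have hsp := hN.spectral_theorem
  set W : Matrix J J ℝ := (hN.eigenvectorUnitary : Matrix J J ℝ) with hWdef
  have hW : W * Wᵀ = 1 := by
    have h := hN.eigenvectorUnitary.2
    rw [Matrix.mem_unitaryGroup_iff] at h
    rwa [Matrix.star_eq_conjTranspose, Matrix.conjTranspose_eq_transpose_of_trivial] at h
  have hNeq : N = W * (Matrix.diagonal hN.eigenvalues) * Wᵀ := by
    rw [Unitary.conjStarAlgAut_apply, Matrix.star_eq_conjTranspose,
      Matrix.conjTranspose_eq_transpose_of_trivial] at hsp
    have he : (RCLike.ofReal ∘ hN.eigenvalues : J → ℝ) = hN.eigenvalues := by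
      funext x; simp
    rw [he] at hsp
    exact hsp
  have h1 : N.charpoly = (Matrix.diagonal hN.eigenvalues).charpoly := by
    conv_lhs => rw [hNeq]
    exact charpoly_orth_conj _ _ hW
  rw [h1]
  unfold Matrix.charpoly
  have h2 : charmatrix (Matrix.diagonal hN.eigenvalues) =
      Matrix.diagonal (fun i => X - C (hN.eigenvalues i)) := by
    ext i j
    by_cases h : i = j
    · subst h; simp [charmatrix_apply_eq]
    · simp [charmatrix_apply_ne _ _ _ h, Matrix.diagonal_apply_ne _ h]
  rw [h2, det_diagonal]

open Polynomial in
theorem multiset_eigs_eq {J : Type*} [Fintype J] [DecidableEq J] {N N' : Matrix J J ℝ}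
    (hN : N.IsHermitian) (hN' : N'.IsHermitian) (h : N'.charpoly = N.charpoly) :
    (Finset.univ.val.map hN'.eigenvalues) = (Finset.univ.val.map hN.eigenvalues) := by
  have h1 := charpoly_symm hN
  have h2 := charpoly_symm hN'
  rw [h1, h2] at h
  have key : ∀ (f : J → ℝ), (∏ i, (X - C (f i))) =
      ((Finset.univ.val.map f).map fun a => X - C a).prod := by
    intro f
    rw [Multiset.map_map]
    rfl
  have := congrArg Polynomial.roots h
  rwa [key hN'.eigenvalues, key hN.eigenvalues,
    Polynomial.roots_multiset_prod_X_sub_C, Polynomial.roots_multiset_prod_X_sub_C] at this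

theorem exists_equiv_of_multiset_map_eq {J : Type*} [Fintype J] [DecidableEq J] {f g : J → ℝ}
    (h : (Finset.univ.val.map f) = (Finset.univ.val.map g)) :
    ∃ e : J ≃ J, ∀ j, f j = g (e j) := by
  classical
  have hcard : ∀ c : ℝ, Fintype.card {a // f a = c} = Fintype.card {b // g b = c} := by
    intro c
    have hcount := congrArg (Multiset.count c) h
    rw [Multiset.count_map, Multiset.count_map] at hcount
    rw [Fintype.card_subtype, Fintype.card_subtype]
    simpa [Finset.filter, eq_comm] using hcount
  exact ⟨Equiv.ofFiberEquiv (f := f) (g := g) fun c => Fintype.equivOfCardEq (hcard c),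
    fun j => (Equiv.ofFiberEquiv_map (fun c => Fintype.equivOfCardEq (hcard c)) j).symm⟩

theorem pauli_expand (M : Matrix (Fin 2) (Fin 2) ℂ) :
    M = (M.trace / 2) • 1 + ∑ k, (((M * pauli k).trace) / 2) • pauli k := by
  ext i j
  fin_cases i <;> fin_cases j <;>
    (simp [pauli, Matrix.trace, Matrix.mul_apply, Fin.sum_univ_three, Fin.sum_univ_two,
      Matrix.one_apply]) <;> ring_nf <;>
    (simp [Complex.ext_iff]) <;> constructor <;> ring

theorem pauli_mul_trace (i k : Fin 3) :
    (pauli i * pauli k).trace = if i = k then 2 else 0 := by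
  fin_cases i <;> fin_cases k <;>
    simp [pauli, Matrix.trace, Matrix.mul_apply, Fin.sum_univ_three, Fin.sum_univ_two] <;>
    ring_nf

theorem pauli_hermitian (i : Fin 3) : (pauli i)ᴴ = pauli i := by
  fin_cases i <;> ext r c <;> fin_cases r <;> fin_cases c <;>
    simp [pauli, Matrix.conjTranspose_apply]

theorem pauli_trace (i : Fin 3) : (pauli i).trace = 0 := by
  fin_cases i <;> simp [pauli, Matrix.trace, Fin.sum_univ_two]

noncomputable def rot (U : Matrix (Fin 2) (Fin 2) ℂ) : Matrix (Fin 3) (Fin 3) ℝ :=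
  fun i k => ((((Uᴴ * pauli i * U) * pauli k).trace) / 2).re

theorem trace_real (U : Matrix (Fin 2) (Fin 2) ℂ) (i k : Fin 3) :
    (((Uᴴ * pauli i * U * pauli k).trace / 2).re : ℂ)
      = (Uᴴ * pauli i * U * pauli k).trace / 2 := by
  set M := Uᴴ * pauli i * U with hM
  have hMH : Mᴴ = M := by
    rw [hM]
    simp [Matrix.conjTranspose_mul, pauli_hermitian, Matrix.mul_assoc]
  have hconj : (starRingEnd ℂ) ((M * pauli k).trace) = (M * pauli k).trace := by
    rw [starRingEnd_apply, ← Matrix.trace_conjTranspose, Matrix.conjTranspose_mul,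
      pauli_hermitian, hMH, Matrix.trace_mul_comm]
  have : (starRingEnd ℂ) ((M * pauli k).trace / 2) = (M * pauli k).trace / 2 := by
    rw [map_div₀, hconj, map_ofNat]
  exact Complex.conj_eq_iff_re.mp this

theorem conj_pauli (U : Matrix (Fin 2) (Fin 2) ℂ) (hU : Uᴴ * U = 1) (i : Fin 3) :
    Uᴴ * pauli i * U = ∑ k, ((rot U i k : ℝ) : ℂ) • pauli k := by
  have hU2 : U * Uᴴ = 1 := mul_eq_one_comm.mp hU
  have h0 : (Uᴴ * pauli i * U).trace = 0 := by
    rw [Matrix.trace_mul_cycle, hU2, Matrix.one_mul, pauli_trace]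
  conv_lhs => rw [pauli_expand (Uᴴ * pauli i * U)]
  rw [h0]
  simp only [zero_div, zero_smul, zero_add]
  congr 1
  funext k
  rw [rot, trace_real]

theorem rot_orth (U : Matrix (Fin 2) (Fin 2) ℂ) (hU : Uᴴ * U = 1) :
    rot U * (rot U)ᵀ = 1 := by
  have hU2 : U * Uᴴ = 1 := mul_eq_one_comm.mp hU
  ext i i'
  have hmid : (Uᴴ * pauli i * U) * (Uᴴ * pauli i' * U) = Uᴴ * (pauli i * pauli i') * U := by
    simp only [Matrix.mul_assoc]
    rw [← Matrix.mul_assoc U Uᴴ, hU2, Matrix.one_mul]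
  have key : ((Uᴴ * pauli i * U) * (Uᴴ * pauli i' * U)).trace = if i = i' then 2 else 0 := by
    rw [hmid, Matrix.trace_mul_cycle, ← Matrix.mul_assoc, hU2, Matrix.one_mul, pauli_mul_trace]
  have expand : ((Uᴴ * pauli i * U) * (Uᴴ * pauli i' * U)).trace
      = ∑ k, ((rot U i k : ℝ) : ℂ) * ((rot U i' k : ℝ) : ℂ) * 2 := by
    conv_lhs => rw [conj_pauli U hU i, conj_pauli U hU i']
    rw [Matrix.sum_mul, Matrix.trace_sum]
    congr 1
    funext k
    rw [Matrix.mul_sum, Matrix.trace_sum, Finset.sum_eq_single k]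
    · rw [Matrix.smul_mul, Matrix.mul_smul, Matrix.trace_smul, Matrix.trace_smul,
        pauli_mul_trace, if_pos rfl]
      simp only [smul_eq_mul]
      ring
    · intro l _ hl
      rw [Matrix.smul_mul, Matrix.mul_smul, Matrix.trace_smul, Matrix.trace_smul,
        pauli_mul_trace, if_neg hl.symm]
      simp
    · intro h; exact absurd (Finset.mem_univ k) h
  rw [expand] at key
  rw [Matrix.mul_apply]
  simp only [Matrix.transpose_apply, Matrix.one_apply]
  by_cases h : i = i'
  · subst h
    rw [if_pos rfl] at key ⊢
    have : ((∑ k, rot U i k * rot U i k * 2 : ℝ) : ℂ) = ((2 : ℝ) : ℂ) := by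
      push_cast
      rw [key]
    have h2 : (∑ k, rot U i k * rot U i k * 2 : ℝ) = 2 := by exact_mod_cast this
    rw [← Finset.sum_mul] at h2
    linarith
  · rw [if_neg h] at key ⊢
    have : ((∑ k, rot U i k * rot U i' k * 2 : ℝ) : ℂ) = ((0 : ℝ) : ℂ) := by
      push_cast
      rw [key]
    have h2 : (∑ k, rot U i k * rot U i' k * 2 : ℝ) = 0 := by exact_mod_cast this
    rw [← Finset.sum_mul] at h2
    linarith

theorem tensorOp_mul {n : ℕ} (A B : Fin n → Matrix (Fin 2) (Fin 2) ℂ) :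
    tensorOp A * tensorOp B = tensorOp (fun j => A j * B j) := by
  ext r c
  rw [Matrix.mul_apply]
  unfold tensorOp
  simp only [Matrix.mul_apply]
  rw [Fintype.prod_sum (f := fun j (m : Fin 2) => A j (r j) m * B j m (c j))]
  congr 1
  funext x
  rw [Finset.prod_mul_distrib]

theorem tensorOp_conjTranspose {n : ℕ} (A : Fin n → Matrix (Fin 2) (Fin 2) ℂ) :
    (tensorOp A)ᴴ = tensorOp (fun j => (A j)ᴴ) := by
  ext r c
  rw [Matrix.conjTranspose_apply]
  unfold tensorOp
  rw [star_prod]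
  congr 1

theorem tensorOp_sum {n : ℕ} (c : Fin n → Fin 3 → ℝ) :
    tensorOp (fun j => ∑ k, ((c j k : ℝ) : ℂ) • pauli k)
      = ∑ g : Fin n → Fin 3, ((∏ j, c j (g j) : ℝ) : ℂ) • tensorOp (fun j => pauli (g j)) := by
  ext r c0
  rw [Matrix.sum_apply]
  unfold tensorOp
  have h1 : ∀ j, (∑ k, ((c j k : ℝ) : ℂ) • pauli k) (r j) (c0 j)
      = ∑ k, ((c j k : ℝ) : ℂ) * pauli k (r j) (c0 j) := by
    intro j
    rw [Matrix.sum_apply]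
    congr 1
  simp only [h1]
  rw [Fintype.prod_sum]
  congr 1
  funext g
  rw [Finset.prod_mul_distrib]
  erw [Matrix.smul_apply, smul_eq_mul]
  push_cast
  ring

theorem corr_transform {n : ℕ} (ρ : Matrix (Fin n → Fin 2) (Fin n → Fin 2) ℂ)
    (U : Fin n → Matrix (Fin 2) (Fin 2) ℂ) (hU : ∀ j, (U j)ᴴ * U j = 1)
    (f : Fin n → Fin 3) :
    corr (tensorOp U * ρ * (tensorOp U)ᴴ) f
      = ∑ g, (∏ j, rot (U j) (f j) (g j)) * corr ρ g := by
  unfold corr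
  have h1 : (tensorOp U * ρ * (tensorOp U)ᴴ * tensorOp fun j => pauli (f j)).trace
      = (ρ * tensorOp fun j => (U j)ᴴ * pauli (f j) * U j).trace := by
    rw [tensorOp_conjTranspose]
    rw [Matrix.mul_assoc (tensorOp U) ρ, Matrix.trace_mul_cycle, Matrix.trace_mul_cycle]
    rw [Matrix.mul_assoc, Matrix.mul_assoc, tensorOp_mul, tensorOp_mul]
    simp only [Matrix.mul_assoc]
  rw [h1]
  have h2 : (tensorOp fun j => (U j)ᴴ * pauli (f j) * U j)
      = ∑ g : Fin n → Fin 3, ((∏ j, rot (U j) (f j) (g j) : ℝ) : ℂ)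
          • tensorOp (fun j => pauli (g j)) := by
    have : (fun j => (U j)ᴴ * pauli (f j) * U j)
        = fun j => ∑ k, ((rot (U j) (f j) k : ℝ) : ℂ) • pauli k := by
      funext j
      exact conj_pauli (U j) (hU j) (f j)
    rw [this]
    exact tensorOp_sum fun j k => rot (U j) (f j) k
  rw [h2, Matrix.mul_sum, Matrix.trace_sum]
  rw [Complex.re_sum]
  congr 1
  funext g
  rw [Matrix.mul_smul, Matrix.trace_smul]
  rw [smul_eq_mul, Complex.re_ofReal_mul]

def tensR {ι : Type*} [Fintype ι] [DecidableEq ι] (B : ι → Matrix (Fin 3) (Fin 3) ℝ) :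
    Matrix (ι → Fin 3) (ι → Fin 3) ℝ :=
  fun r c => ∏ j, B j (r j) (c j)

theorem tensR_orth {ι : Type*} [Fintype ι] [DecidableEq ι]
    (B : ι → Matrix (Fin 3) (Fin 3) ℝ) (hB : ∀ j, B j * (B j)ᵀ = 1) :
    tensR B * (tensR B)ᵀ = 1 := by
  ext r c
  rw [Matrix.mul_apply]
  simp only [Matrix.transpose_apply]
  unfold tensR
  simp only [← Finset.prod_mul_distrib]
  rw [← Fintype.prod_sum (f := fun j (k : Fin 3) => B j (r j) k * B j (c j) k)]
  have h1 : ∀ j, (∑ k, B j (r j) k * B j (c j) k) = if r j = c j then 1 else 0 := by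
    intro j
    have := congrFun (congrFun (hB j) (r j)) (c j)
    rw [Matrix.mul_apply] at this
    simp only [Matrix.transpose_apply] at this
    rw [this, Matrix.one_apply]
  simp only [h1]
  rw [Matrix.one_apply]
  by_cases h : r = c
  · subst h; simp
  · rw [if_neg h]
    have : ∃ j, r j ≠ c j := by
      by_contra hc
      push_neg at hc
      exact h (funext hc)
    obtain ⟨j, hj⟩ := this
    exact Finset.prod_eq_zero (Finset.mem_univ j) (by rw [if_neg hj])

theorem matricize_transform {n : ℕ} (T T' : (Fin n → Fin 3) → ℝ)
    (R : Fin n → Matrix (Fin 3) (Fin 3) ℝ) (A : Finset (Fin n))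
    (h : ∀ f, T' f = ∑ g, (∏ j, R j (f j) (g j)) * T g) :
    matricize A T' = tensR (fun j : {j // j ∈ A} => R j)
      * matricize A T * (tensR (fun j : {j // j ∉ A} => R j))ᵀ := by
  classical
  ext r c
  rw [Matrix.mul_apply]
  simp only [Matrix.transpose_apply, Matrix.mul_apply, Finset.sum_mul]
  rw [Finset.sum_comm]
  show matricize A T' r c = _
  rw [matricize, h]
  rw [← Equiv.sum_comp (Equiv.piEquivPiSubtypeProd (· ∈ A) (fun _ => Fin 3)).symm]
  rw [Fintype.sum_prod_type]
  congr 1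
  funext r'
  congr 1
  funext c'
  have hcomb : ∀ (x : {j // j ∈ A} → Fin 3) (y : {j // j ∉ A} → Fin 3) (j : Fin n),
      (Equiv.piEquivPiSubtypeProd (· ∈ A) (fun _ => Fin 3)).symm (x, y) j
        = if hj : j ∈ A then x ⟨j, hj⟩ else y ⟨j, hj⟩ := by
    intro x y j
    rfl
  have hT : T ((Equiv.piEquivPiSubtypeProd (· ∈ A) (fun _ => Fin 3)).symm (r', c'))
      = matricize A T r' c' := by
    rw [matricize]
    congr 1
  rw [hT]
  have hsplit : (∏ j, R j ((if hj : j ∈ A then r ⟨j, hj⟩ else c ⟨j, hj⟩ : Fin 3))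
        (((Equiv.piEquivPiSubtypeProd (· ∈ A) (fun _ => Fin 3)).symm (r', c')) j))
      = (∏ j : {j // j ∈ A}, R j (r j) (r' j)) * ∏ j : {j // j ∉ A}, R j (c j) (c' j) := by
    rw [← Fintype.prod_subtype_mul_prod_subtype (· ∈ A)
      (fun j => R j ((if hj : j ∈ A then r ⟨j, hj⟩ else c ⟨j, hj⟩ : Fin 3))
        (((Equiv.piEquivPiSubtypeProd (· ∈ A) (fun _ => Fin 3)).symm (r', c')) j))]
    congr 1
    · refine Finset.prod_congr (by congr!) fun j _ => ?_
      rw [hcomb]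
      rcases j with ⟨j, hj⟩
      simp [hj]
    · refine Finset.prod_congr (by congr!) fun j _ => ?_
      rw [hcomb]
      rcases j with ⟨j, hj⟩
      simp [hj]
  rw [hsplit]
  unfold tensR
  ring

theorem eig_congr {J : Type*} [Fintype J] [DecidableEq J] {N N' : Matrix J J ℝ}
    (h : N = N') (hN : N.IsHermitian) (hN' : N'.IsHermitian) :
    hN.eigenvalues = hN'.eigenvalues := by
  subst h
  rfl

theorem kyfan_perm {J : Type*} [Fintype J] [DecidableEq J] (f g : J → ℝ) (e : J ≃ J)
    (h : ∀ j, f j = g (e j)) (k : ℕ) :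
    ((Finset.univ : Finset (Finset J)).sup' ⟨∅, Finset.mem_univ ∅⟩
      fun s => if s.card = k then ∑ j ∈ s, f j else 0)
    = (Finset.univ : Finset (Finset J)).sup' ⟨∅, Finset.mem_univ ∅⟩
      fun s => if s.card = k then ∑ j ∈ s, g j else 0 := by
  apply le_antisymm
  · refine Finset.sup'_le _ _ fun s _ => ?_
    have : (if s.card = k then ∑ j ∈ s, f j else 0)
        = (if (s.map e.toEmbedding).card = k then ∑ j ∈ s.map e.toEmbedding, g j else 0) := by
      rw [Finset.card_map, Finset.sum_map]
      simp only [Equiv.coe_toEmbedding]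
      congr 1
      exact Finset.sum_congr rfl fun j _ => h j
    rw [this]
    exact Finset.le_sup' (fun s => if s.card = k then ∑ j ∈ s, g j else 0) (Finset.mem_univ _)
  · refine Finset.sup'_le _ _ fun s _ => ?_
    have : (if s.card = k then ∑ j ∈ s, g j else 0)
        = (if (s.map e.symm.toEmbedding).card = k then ∑ j ∈ s.map e.symm.toEmbedding, f j else 0) := by
      rw [Finset.card_map, Finset.sum_map]
      simp only [Equiv.coe_toEmbedding]
      congr 1
      refine Finset.sum_congr rfl fun j _ => ?_
      rw [h (e.symm j), Equiv.apply_symm_apply]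
    rw [this]
    exact Finset.le_sup' (fun s => if s.card = k then ∑ j ∈ s, f j else 0) (Finset.mem_univ _)

/-- LU invariance: If `ρ' = (U₁ ⊗ ⋯ ⊗ U_n) ρ (U₁ ⊗ ⋯ ⊗ U_n)†`
for 2×2 unitaries `U_j`, then for every nonempty proper subset `A` of the
subsystems the `A`-matricizations of the full correlation tensors of `ρ` and
`ρ'` have the same singular values (up to a permutation); in particular all Ky
Fan norms (hence the trace norm) and the Frobenius norm of the matricizations
are invariant under local unitary transformations. -/
theorem local_unitary_invariance_of_matricization_norms
    (n : ℕ)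
    (ρ : Matrix (Fin n → Fin 2) (Fin n → Fin 2) ℂ)
    (hρ : ρ.PosSemidef) (hρtr : ρ.trace = 1)
    (U : Fin n → Matrix (Fin 2) (Fin 2) ℂ)
    (hU : ∀ j, (U j)ᴴ * U j = 1)
    (ρ' : Matrix (Fin n → Fin 2) (Fin n → Fin 2) ℂ)
    (hρ' : ρ' = tensorOp U * ρ * (tensorOp U)ᴴ)
    (A : Finset (Fin n)) (hA : A.Nonempty) (hA' : A ≠ Finset.univ) :
    (∃ e : ({j // j ∉ A} → Fin 3) ≃ ({j // j ∉ A} → Fin 3),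
        ∀ c, singVals (matricize A (corr ρ')) c =
          singVals (matricize A (corr ρ)) (e c)) ∧
    (∀ k : ℕ, kyFanNorm k (matricize A (corr ρ')) =
        kyFanNorm k (matricize A (corr ρ))) ∧
    traceNorm (matricize A (corr ρ')) = traceNorm (matricize A (corr ρ)) ∧
    Real.sqrt (∑ r, ∑ c, (matricize A (corr ρ') r c) ^ 2) =
      Real.sqrt (∑ r, ∑ c, (matricize A (corr ρ) r c) ^ 2) := by
  classical
  set M : Matrix ({j // j ∈ A} → Fin 3) ({j // j ∉ A} → Fin 3) ℝ := matricize A (corr ρ) with hM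
  set M' : Matrix ({j // j ∈ A} → Fin 3) ({j // j ∉ A} → Fin 3) ℝ :=
    matricize A (corr ρ') with hM'
  set P := tensR (fun j : {j // j ∈ A} => rot (U j)) with hPdef
  set Q := tensR (fun j : {j // j ∉ A} => rot (U j)) with hQdef
  have hfact : M' = P * M * Qᵀ :=
    matricize_transform (corr ρ) (corr ρ') (fun j => rot (U j)) A
      (fun f => by rw [hρ']; exact corr_transform ρ U hU f)
  have hP : P * Pᵀ = 1 := tensR_orth _ fun j => rot_orth _ (hU j)
  have hQ : Q * Qᵀ = 1 := tensR_orth _ fun j => rot_orth _ (hU j)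
  have hPt : Pᵀ * P = 1 := mul_eq_one_comm.mp hP
  have hQt : Qᵀ * Q = 1 := mul_eq_one_comm.mp hQ
  have hNT : M'ᵀ * M' = Q * (Mᵀ * M) * Qᵀ := by
    rw [hfact, Matrix.transpose_mul, Matrix.transpose_mul, Matrix.transpose_transpose]
    simp only [Matrix.mul_assoc]
    rw [← Matrix.mul_assoc Pᵀ P, hPt, Matrix.one_mul]
  have hNH : M'ᴴ * M' = Q * (Mᴴ * M) * Qᵀ := by
    rw [Matrix.conjTranspose_eq_transpose_of_trivial, Matrix.conjTranspose_eq_transpose_of_trivial]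
    exact hNT
  have hH := (Matrix.posSemidef_conjTranspose_mul_self M).1
  have hH' := (Matrix.posSemidef_conjTranspose_mul_self M').1
  have hchar : (M'ᴴ * M').charpoly = (Mᴴ * M).charpoly := by
    have h1 : (M'ᴴ * M').charpoly = (Q * (Mᴴ * M) * Qᵀ).charpoly := by rw [hNH]
    rw [h1]
    exact charpoly_orth_conj _ _ hQ
  obtain ⟨e, he⟩ := exists_equiv_of_multiset_map_eq (multiset_eigs_eq hH hH' hchar)
  have hs : ∀ c, singVals M' c = singVals M (e c) := by
    intro c
    unfold singVals
    rw [he c]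
  refine ⟨⟨e, hs⟩, ?_, ?_, ?_⟩
  · intro k
    unfold kyFanNorm
    exact kyfan_perm _ _ e hs k
  · unfold traceNorm
    calc ∑ j, singVals M' j = ∑ j, singVals M (e j) := Finset.sum_congr rfl fun j _ => hs j
      _ = ∑ j, singVals M j := Equiv.sum_comp e (singVals M)
  · have key : ∀ (X : Matrix ({j // j ∈ A} → Fin 3) ({j // j ∉ A} → Fin 3) ℝ),
        ∑ r, ∑ c, X r c ^ 2 = (Xᵀ * X).trace := by
      intro X
      unfold Matrix.trace
      simp only [Matrix.diag_apply, Matrix.mul_apply, Matrix.transpose_apply, sq]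
      exact Finset.sum_comm
    refine congrArg Real.sqrt ?_
    rw [key M', key M, hNT, Matrix.trace_mul_cycle, hQt, Matrix.one_mul]
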